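/- Let B be a finite set of source elements of a set Y, and let α be a source element of Y that is consistent with every element of B. Then α is constant on every consistency class of B: for all y ∈ Y and all u, v ∈ B_y, α(u) = α(v). -/
import Mathlib


/-- A source element of `Y`: values in `[0,1]`, finite support, total weight at most 1. -/
def IsSourceElem {Y : Type*} (β : Y → ℝ) : Prop :=
  (∀ y, 0 ≤ β y ∧ β y ≤ 1) ∧ (Function.support β).Finite ∧ ∑ᶠ y, β y ≤ 1

/-- `α` is consistent with `δ`: strict preferences of either never contradict
the (weak) preferences of the other. -/
def ConsistentWith {Y : Type*} (α δ : Y → ℝ) : Prop :=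
  ∀ u v : Y, (α u < α v → δ u ≤ δ v) ∧ (δ u < δ v → α u ≤ α v)

/-- The strict preference step of `B`: `u ⊲_δ v` (i.e. `δ u < δ v`) for some `δ ∈ B`. -/
def LtRel {Y : Type*} (B : Set (Y → ℝ)) (u v : Y) : Prop :=
  ∃ δ ∈ B, δ u < δ v

/-- The consistency class of `B` at `y`: `{y}` together with all `u` lying in a common
`⊲`-cycle with `y` in `B`. -/
def consClass {Y : Type*} (B : Set (Y → ℝ)) (y : Y) : Set Y :=
  {y} ∪ {u | Relation.TransGen (LtRel B) u y ∧ Relation.TransGen (LtRel B) y u}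

/-- A source element consistent with every element of a finite set `B` of source
elements is constant on every consistency class of `B`. -/
theorem consistentWith_constant_on_consClass {Y : Type*} (B : Set (Y → ℝ))
    (hfin : B.Finite) (hsrc : ∀ β ∈ B, IsSourceElem β)
    (α : Y → ℝ) (hα : IsSourceElem α) (hcons : ∀ δ ∈ B, ConsistentWith α δ) :
    ∀ y : Y, ∀ u ∈ consClass B y, ∀ v ∈ consClass B y, α u = α v := by
  have key : ∀ a b : Y, Relation.TransGen (LtRel B) a b → α a ≤ α b := by
    intro a b h
    induction h with
    | single h => obtain ⟨δ, hδ, hlt⟩ := h; exact ((hcons δ hδ) _ _).2 hlt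
    | tail _ h ih =>
      obtain ⟨δ, hδ, hlt⟩ := h
      exact le_trans ih (((hcons δ hδ) _ _).2 hlt)
  have eqy : ∀ y u : Y, u ∈ consClass B y → α u = α y := by
    intro y u hu
    rcases hu with h | ⟨h1, h2⟩
    · rw [h]
    · exact le_antisymm (key _ _ h1) (key _ _ h2)
  intro y u hu v hv
  rw [eqy y u hu, eqy y v hv]
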